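/- Let u, v : ℝ^d × ℝ → ℝ^d be smooth (C^∞) and suppose that at every (x,t) they satisfy the gradient-form stochastic-mechanics equations ∂_t v = −(1/m) ∇V + ½ ∇‖u‖² − ½ ∇‖v‖² + (ħ/(2m)) ∇⟨∇, u⟩ and ∂_t u = −∇⟨v, u⟩ − (ħ/(2m)) ∇⟨∇, v⟩. Suppose moreover there are smooth S₀ : ℝ^d → ℝ and smooth ρ₀ : ℝ^d → ℝ with ρ₀ > 0 such that v(x,0) = (ħ/m) ∇S₀(x) and u(x,0) = (ħ/(2m)) ∇ log ρ₀(x) for all x. Define S(x,t) := S₀(x) + ∫₀ᵗ ( ½ ⟨∇, u⟩(x,s) + (m/(2ħ)) ‖u(x,s)‖² − (m/(2ħ)) ‖v(x,s)‖² − (1/ħ) V(x,s) ) ds and ρ(x,t) := ρ₀(x) · exp( −∫₀ᵗ ( ⟨∇, v⟩(x,s) + (2m/ħ) ⟨u(x,s), v(x,s)⟩ ) ds ). Then ρ > 0 everywhere, v = (ħ/m) ∇S and u = (ħ/(2m)) ∇ log ρ at every (x,t), and the function ψ := √ρ · e^{iS} satisfies the Schrödinger equation iħ ∂_t ψ = −(ħ²/(2m))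 Δψ + V ψ at every (x,t) ∈ ℝ^d × ℝ, with ψ(x,0) = √(ρ₀(x)) e^{i S₀(x)}. -/

import Mathlib

noncomputable section

/-- Spatial partial derivative in the `j`-th coordinate direction. -/
def pdx {d : ℕ} {E : Type*} [NormedAddCommGroup E] [NormedSpace ℝ E]
    (j : Fin d) (f : (Fin d → ℝ) → E) (x : Fin d → ℝ) : E :=
  fderiv ℝ f x (Pi.single j 1)

/-- The wave function `ψ = √ρ · e^{iS}`. -/
def psi {d : ℕ} (ρ S : (Fin d → ℝ) → ℝ → ℝ) (x : Fin d → ℝ) (t : ℝ) : ℂ :=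
  (Real.sqrt (ρ x t) : ℂ) * Complex.exp (Complex.I * (S x t : ℂ))

/-- The time-dependent Schrödinger equation
`iℏ ∂ₜψ = −(ℏ²/(2m)) Δψ + V ψ` holding at every point `(x, t)`. -/
def SchrodingerEq {d : ℕ} (ℏ m : ℝ) (V : (Fin d → ℝ) → ℝ → ℝ)
    (ψ : (Fin d → ℝ) → ℝ → ℂ) : Prop :=
  ∀ (x : Fin d → ℝ) (t : ℝ),
    Complex.I * (ℏ : ℂ) * deriv (fun s => ψ x s) t
      = -((ℏ : ℂ) ^ 2 / (2 * (m : ℂ)))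
            * (∑ j : Fin d, pdx j (fun y => pdx j (fun z => ψ z t) y) x)
        + (V x t : ℂ) * ψ x t

/-- The phase `S(x,t) = S₀(x) + ∫₀ᵗ (½⟨∇,u⟩ + (m/(2ℏ))‖u‖² − (m/(2ℏ))‖v‖² − (1/ℏ)V) ds`
recovered by time integration from the velocities. -/
def phaseFromVel {d : ℕ} (ℏ m : ℝ) (V : (Fin d → ℝ) → ℝ → ℝ)
    (u v : (Fin d → ℝ) → ℝ → (Fin d → ℝ)) (S₀ : (Fin d → ℝ) → ℝ)
    (x : Fin d → ℝ) (t : ℝ) : ℝ :=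
  S₀ x + ∫ s in (0:ℝ)..t,
    ((1 / 2) * (∑ j : Fin d, pdx j (fun y => u y s j) x)
      + (m / (2 * ℏ)) * (∑ j : Fin d, (u x s j) ^ 2)
      - (m / (2 * ℏ)) * (∑ j : Fin d, (v x s j) ^ 2)
      - (1 / ℏ) * V x s)

/-- The density `ρ(x,t) = ρ₀(x) · exp(−∫₀ᵗ (⟨∇,v⟩ + (2m/ℏ)⟨u,v⟩) ds)`
recovered by time integration from the velocities. -/
def densityFromVel {d : ℕ} (ℏ m : ℝ)
    (u v : (Fin d → ℝ) → ℝ → (Fin d → ℝ)) (ρ₀ : (Fin d → ℝ) → ℝ)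
    (x : Fin d → ℝ) (t : ℝ) : ℝ :=
  ρ₀ x * Real.exp (-∫ s in (0:ℝ)..t,
    ((∑ j : Fin d, pdx j (fun y => v y s j) x)
      + (2 * m / ℏ) * (∑ j : Fin d, u x s j * v x s j)))

namespace WFR

open intervalIntegral Function

variable {d : ℕ}

theorem sliceF {G : Type*} [NormedAddCommGroup G] [NormedSpace ℝ G]
    {F : ((Fin d → ℝ) × ℝ) → G} (hF : ContDiff ℝ (⊤ : ℕ∞) F) (x : Fin d → ℝ) (t : ℝ) :
    HasFDerivAt (fun y => F (y, t))
      ((fderiv ℝ F (x, t)).comp (ContinuousLinearMap.inl ℝ (Fin d → ℝ) ℝ)) x :=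
  ((hF.differentiable (by simp) (x, t)).hasFDerivAt).comp x (hasFDerivAt_prodMk_left x t)

theorem sliceT {G : Type*} [NormedAddCommGroup G] [NormedSpace ℝ G]
    {F : ((Fin d → ℝ) × ℝ) → G} (hF : ContDiff ℝ (⊤ : ℕ∞) F) (x : Fin d → ℝ) (t : ℝ) :
    HasDerivAt (fun s => F (x, s)) (fderiv ℝ F (x, t) (0, 1)) t :=
  ((hF.differentiable (by simp) (x, t)).hasFDerivAt).comp_hasDerivAt t
    ((hasDerivAt_const t x).prodMk (hasDerivAt_id t))

theorem pdx_slice {G : Type*} [NormedAddCommGroup G] [NormedSpace ℝ G]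
    {F : ((Fin d → ℝ) × ℝ) → G} (hF : ContDiff ℝ (⊤ : ℕ∞) F) (x : Fin d → ℝ) (t : ℝ)
    (j : Fin d) :
    pdx j (fun y => F (y, t)) x = fderiv ℝ F (x, t) (Pi.single j 1, 0) := by
  unfold pdx
  rw [(sliceF hF x t).fderiv]
  simp

/-- smoothness of `p ↦ fderiv F p w` -/
theorem contDiff_fderiv_apply {G : Type*} [NormedAddCommGroup G] [NormedSpace ℝ G]
    {F : ((Fin d → ℝ) × ℝ) → G} (hF : ContDiff ℝ (⊤ : ℕ∞) F) (w : (Fin d → ℝ) × ℝ) :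
    ContDiff ℝ (⊤ : ℕ∞) (fun p => fderiv ℝ F p w) := by
  have h1 : ContDiff ℝ (⊤ : ℕ∞) (fderiv ℝ F) := hF.fderiv_right (mod_cast le_top)
  exact (ContinuousLinearMap.apply ℝ G w).contDiff.comp h1

/-- slice of vector-valued function: component fderiv -/
theorem sliceF_comp {F : ((Fin d → ℝ) × ℝ) → (Fin d → ℝ)} (hF : ContDiff ℝ (⊤ : ℕ∞) F)
    (x : Fin d → ℝ) (t : ℝ) (j i : Fin d) :
    pdx i (fun y => F (y, t) j) x = fderiv ℝ F (x, t) (Pi.single i 1, 0) j := by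
  have h : HasFDerivAt (fun y => F (y, t) j)
      ((ContinuousLinearMap.proj j).comp
        ((fderiv ℝ F (x, t)).comp (ContinuousLinearMap.inl ℝ (Fin d → ℝ) ℝ))) x :=
    by simpa [Function.comp_def] using (ContinuousLinearMap.proj j).hasFDerivAt.comp x (sliceF hF x t)
  unfold pdx
  rw [h.fderiv]
  simp

theorem contDiff_eval {F : ((Fin d → ℝ) × ℝ) → (Fin d → ℝ)} (hF : ContDiff ℝ (⊤ : ℕ∞) F)
    (j : Fin d) : ContDiff ℝ (⊤ : ℕ∞) (fun p => F p j) :=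
  (ContinuousLinearMap.proj (R := ℝ) (φ := fun _ : Fin d => ℝ) j).contDiff.comp hF

/-- Differentiation under the interval integral for smooth integrands. -/
theorem key_param {f : ((Fin d → ℝ) × ℝ) → ℝ} (hf : ContDiff ℝ (⊤ : ℕ∞) f)
    (x : Fin d → ℝ) (t : ℝ) :
    HasFDerivAt (fun y => ∫ s in (0:ℝ)..t, f (y, s))
      (∫ s in (0:ℝ)..t, (fderiv ℝ f (x, s)).comp (ContinuousLinearMap.inl ℝ (Fin d → ℝ) ℝ)) x := by
  set F' : (Fin d → ℝ) → ℝ → ((Fin d → ℝ) →L[ℝ] ℝ) := fun y s =>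
    (fderiv ℝ f (y, s)).comp (ContinuousLinearMap.inl ℝ (Fin d → ℝ) ℝ) with hF'def
  have hfc : Continuous f := hf.continuous
  have hF'cont : Continuous (fun p : (Fin d → ℝ) × ℝ => F' p.1 p.2) := by
    apply Continuous.clm_comp
    · exact (hf.continuous_fderiv (by simp))
    · exact continuous_const
  -- compact bound
  obtain ⟨C, hC⟩ : ∃ C, ∀ p ∈ (Metric.closedBall x 1 ×ˢ Set.uIcc (0:ℝ) t),
      ‖F' p.1 p.2‖ ≤ C := by
    rcases ((isCompact_closedBall x 1).prod isCompact_uIcc).exists_bound_of_continuousOn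
      (hF'cont.continuousOn) with ⟨C, hC⟩
    exact ⟨C, fun p hp => hC p hp⟩
  have hcontx : ∀ y : Fin d → ℝ, Continuous (fun s => f (y, s)) := fun y =>
    hfc.comp (Continuous.prodMk_right y)
  have hcontF' : Continuous (fun s => F' x s) := hF'cont.comp (Continuous.prodMk_right x)
  have key := intervalIntegral.hasFDerivAt_integral_of_dominated_of_fderiv_le
    (F := fun y s => f (y, s)) (F' := F') (x₀ := x) (a := (0:ℝ)) (b := t)
    (μ := MeasureTheory.volume) (bound := fun _ => C) (Metric.ball_mem_nhds x zero_lt_one)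
    (Filter.Eventually.of_forall fun y => ((hcontx y).aestronglyMeasurable))
    ((hcontx x).intervalIntegrable 0 t)
    (hcontF'.aestronglyMeasurable)
    (Filter.Eventually.of_forall fun s hs y hy =>
      hC (y, s) ⟨Metric.ball_subset_closedBall hy, Set.uIoc_subset_uIcc hs⟩)
    (intervalIntegrable_const)
    (Filter.Eventually.of_forall fun s _ y _ => sliceF hf y s)
  exact key

theorem key_param_apply {f : ((Fin d → ℝ) × ℝ) → ℝ} (hf : ContDiff ℝ (⊤ : ℕ∞) f)
    (x : Fin d → ℝ) (t : ℝ) (i : Fin d) :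
    (∫ s in (0:ℝ)..t,
        (fderiv ℝ f (x, s)).comp (ContinuousLinearMap.inl ℝ (Fin d → ℝ) ℝ)) (Pi.single i 1)
      = ∫ s in (0:ℝ)..t, fderiv ℝ f (x, s) (Pi.single i 1, 0) := by
  have hd : Continuous (fun s : ℝ => fderiv ℝ f (x, s)) :=
    (hf.continuous_fderiv (by simp)).comp (Continuous.prodMk_right x)
  have hF'cont : Continuous (fun s : ℝ =>
      (fderiv ℝ f (x, s)).comp (ContinuousLinearMap.inl ℝ (Fin d → ℝ) ℝ)) :=
    hd.clm_comp continuous_const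
  rw [ContinuousLinearMap.intervalIntegral_apply (hF'cont.intervalIntegrable 0 t)]
  simp

section Integrands

variable {d : ℕ} (ℏ m : ℝ) (V : (Fin d → ℝ) → ℝ → ℝ)
  (u v : (Fin d → ℝ) → ℝ → (Fin d → ℝ))

/-- The phase integrand as a function on the product space. -/
def fI : ((Fin d → ℝ) × ℝ) → ℝ := fun p =>
  (1 / 2) * (∑ j : Fin d, fderiv ℝ (uncurry u) p (Pi.single j 1, 0) j)
    + (m / (2 * ℏ)) * (∑ j : Fin d, (u p.1 p.2 j) ^ 2)
    - (m / (2 * ℏ)) * (∑ j : Fin d, (v p.1 p.2 j) ^ 2)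
    - (1 / ℏ) * V p.1 p.2

/-- The log-density integrand as a function on the product space. -/
def gI : ((Fin d → ℝ) × ℝ) → ℝ := fun p =>
  (∑ j : Fin d, fderiv ℝ (uncurry v) p (Pi.single j 1, 0) j)
    + (2 * m / ℏ) * (∑ j : Fin d, u p.1 p.2 j * v p.1 p.2 j)

variable {ℏ m V u v}
variable (hV : ContDiff ℝ (⊤ : ℕ∞) (Function.uncurry V))
  (hu : ContDiff ℝ (⊤ : ℕ∞) (Function.uncurry u))
  (hv : ContDiff ℝ (⊤ : ℕ∞) (Function.uncurry v))

include hu hv hV in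
theorem fI_contDiff : ContDiff ℝ (⊤ : ℕ∞) (fI ℏ m V u v) := by
  unfold fI
  apply ContDiff.sub
  apply ContDiff.sub
  apply ContDiff.add
  · exact contDiff_const.mul (ContDiff.sum fun j _ =>
      contDiff_eval (contDiff_fderiv_apply hu (Pi.single j 1, 0)) j)
  · exact contDiff_const.mul (ContDiff.sum fun j _ => (contDiff_eval hu j).pow 2)
  · exact contDiff_const.mul (ContDiff.sum fun j _ => (contDiff_eval hv j).pow 2)
  · exact contDiff_const.mul hV

include hu hv in
theorem gI_contDiff : ContDiff ℝ (⊤ : ℕ∞) (gI ℏ m u v) := by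
  unfold gI
  apply ContDiff.add
  · exact ContDiff.sum fun j _ =>
      contDiff_eval (contDiff_fderiv_apply hv (Pi.single j 1, 0)) j
  · exact contDiff_const.mul (ContDiff.sum fun j _ => (contDiff_eval hu j).mul (contDiff_eval hv j))

include hu in
theorem fI_eq (x : Fin d → ℝ) (s : ℝ) :
    fI ℏ m V u v (x, s)
      = (1 / 2) * (∑ j : Fin d, pdx j (fun y => u y s j) x)
          + (m / (2 * ℏ)) * (∑ j : Fin d, (u x s j) ^ 2)
          - (m / (2 * ℏ)) * (∑ j : Fin d, (v x s j) ^ 2)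
          - (1 / ℏ) * V x s := by
  have hs : (∑ j : Fin d, pdx j (fun y => u y s j) x)
      = ∑ j : Fin d, fderiv ℝ (uncurry u) (x, s) (Pi.single j 1, 0) j :=
    Finset.sum_congr rfl fun j _ => sliceF_comp hu x s j j
  unfold fI
  dsimp only
  rw [hs]

include hv in
theorem gI_eq (x : Fin d → ℝ) (s : ℝ) :
    gI ℏ m u v (x, s)
      = (∑ j : Fin d, pdx j (fun y => v y s j) x)
          + (2 * m / ℏ) * (∑ j : Fin d, u x s j * v x s j) := by
  have hs : (∑ j : Fin d, pdx j (fun y => v y s j) x)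
      = ∑ j : Fin d, fderiv ℝ (uncurry v) (x, s) (Pi.single j 1, 0) j :=
    Finset.sum_congr rfl fun j _ => sliceF_comp hv x s j j
  unfold gI
  dsimp only
  rw [hs]

end Integrands

section PdxIdent

variable {d : ℕ} {ℏ m : ℝ} {V : (Fin d → ℝ) → ℝ → ℝ}
  {u v : (Fin d → ℝ) → ℝ → (Fin d → ℝ)}
  (hℏ : 0 < ℏ) (hm : 0 < m)
  (hV : ContDiff ℝ (⊤ : ℕ∞) (Function.uncurry V))
  (hu : ContDiff ℝ (⊤ : ℕ∞) (Function.uncurry u))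
  (hv : ContDiff ℝ (⊤ : ℕ∞) (Function.uncurry v))

include hℏ hm hV hu hv in
theorem pdx_fI
    (heqv : ∀ (x : Fin d → ℝ) (t : ℝ) (i : Fin d),
      deriv (fun s => v x s i) t
        = -(1 / m) * pdx i (fun y => V y t) x
          + (1 / 2) * pdx i (fun y => ∑ j : Fin d, (u y t j) ^ 2) x
          - (1 / 2) * pdx i (fun y => ∑ j : Fin d, (v y t j) ^ 2) x
          + (ℏ / (2 * m)) * pdx i (fun y => ∑ j : Fin d, pdx j (fun z => u z t j) y) x)
    (x : Fin d → ℝ) (s : ℝ) (i : Fin d) :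
    pdx i (fun y => fI ℏ m V u v (y, s)) x = (m / ℏ) * deriv (fun τ => v x τ i) s := by
  -- differentiability of the four pieces as slices of smooth functions
  have hA : HasFDerivAt
      (fun y => ∑ j : Fin d, fderiv ℝ (uncurry u) (y, s) (Pi.single j 1, 0) j) _ x :=
    sliceF (ContDiff.sum fun j (_ : j ∈ Finset.univ) =>
      contDiff_eval (contDiff_fderiv_apply hu (Pi.single j 1, 0)) j) x s
  have hB : HasFDerivAt (fun y => ∑ j : Fin d, (u y s j) ^ 2) _ x :=
    sliceF (ContDiff.sum fun j (_ : j ∈ Finset.univ) => (contDiff_eval hu j).pow 2) x s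
  have hC : HasFDerivAt (fun y => ∑ j : Fin d, (v y s j) ^ 2) _ x :=
    sliceF (ContDiff.sum fun j (_ : j ∈ Finset.univ) => (contDiff_eval hv j).pow 2) x s
  have hD : HasFDerivAt (fun y => V y s) _ x := sliceF hV x s
  have hstep : pdx i (fun y => fI ℏ m V u v (y, s)) x
      = (1 / 2) * pdx i (fun y => ∑ j : Fin d, fderiv ℝ (uncurry u) (y, s) (Pi.single j 1, 0) j) x
        + (m / (2 * ℏ)) * pdx i (fun y => ∑ j : Fin d, (u y s j) ^ 2) x
        - (m / (2 * ℏ)) * pdx i (fun y => ∑ j : Fin d, (v y s j) ^ 2) x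
        - (1 / ℏ) * pdx i (fun y => V y s) x := by
    unfold pdx fI
    rw [fderiv_fun_sub, fderiv_fun_sub, fderiv_fun_add, fderiv_const_mul, fderiv_const_mul,
      fderiv_const_mul, fderiv_const_mul]
    · simp
    all_goals
      first
      | exact hA.differentiableAt
      | exact hB.differentiableAt
      | exact hC.differentiableAt
      | exact hD.differentiableAt
      | exact (hA.differentiableAt.const_mul _)
      | exact (hB.differentiableAt.const_mul _)
      | exact (hC.differentiableAt.const_mul _)
      | exact (hD.differentiableAt.const_mul _)
      | exact ((hA.differentiableAt.const_mul _).add (hB.differentiableAt.const_mul _))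
      | exact (((hA.differentiableAt.const_mul _).add
          (hB.differentiableAt.const_mul _)).sub (hC.differentiableAt.const_mul _))
  have hAid : (fun y => ∑ j : Fin d, fderiv ℝ (uncurry u) (y, s) (Pi.single j 1, 0) j)
      = (fun y => ∑ j : Fin d, pdx j (fun z => u z s j) y) := by
    funext y
    exact Finset.sum_congr rfl fun j _ => (sliceF_comp hu y s j j).symm
  rw [hstep, hAid, heqv x s i]
  have hℏ' : ℏ ≠ 0 := ne_of_gt hℏ
  have hm' : m ≠ 0 := ne_of_gt hm
  field_simp
  ring

include hℏ hm hu hv in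
theorem pdx_gI
    (hequ : ∀ (x : Fin d → ℝ) (t : ℝ) (i : Fin d),
      deriv (fun s => u x s i) t
        = -(pdx i (fun y => ∑ j : Fin d, v y t j * u y t j) x)
          - (ℏ / (2 * m)) * pdx i (fun y => ∑ j : Fin d, pdx j (fun z => v z t j) y) x)
    (x : Fin d → ℝ) (s : ℝ) (i : Fin d) :
    pdx i (fun y => gI ℏ m u v (y, s)) x = -(2 * m / ℏ) * deriv (fun τ => u x τ i) s := by
  have hA : HasFDerivAt
      (fun y => ∑ j : Fin d, fderiv ℝ (uncurry v) (y, s) (Pi.single j 1, 0) j) _ x :=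
    sliceF (ContDiff.sum fun j (_ : j ∈ Finset.univ) =>
      contDiff_eval (contDiff_fderiv_apply hv (Pi.single j 1, 0)) j) x s
  have hB : HasFDerivAt (fun y => ∑ j : Fin d, u y s j * v y s j) _ x :=
    sliceF (ContDiff.sum fun j (_ : j ∈ Finset.univ) =>
      (contDiff_eval hu j).mul (contDiff_eval hv j)) x s
  have hstep : pdx i (fun y => gI ℏ m u v (y, s)) x
      = pdx i (fun y => ∑ j : Fin d, fderiv ℝ (uncurry v) (y, s) (Pi.single j 1, 0) j) x
        + (2 * m / ℏ) * pdx i (fun y => ∑ j : Fin d, u y s j * v y s j) x := by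
    unfold pdx gI
    rw [fderiv_fun_add, fderiv_const_mul]
    · simp
    · exact hB.differentiableAt
    · exact hA.differentiableAt
    · exact hB.differentiableAt.const_mul _
  have hAid : (fun y => ∑ j : Fin d, fderiv ℝ (uncurry v) (y, s) (Pi.single j 1, 0) j)
      = (fun y => ∑ j : Fin d, pdx j (fun z => v z s j) y) := by
    funext y
    exact Finset.sum_congr rfl fun j _ => (sliceF_comp hv y s j j).symm
  have hBid : (fun y => ∑ j : Fin d, u y s j * v y s j)
      = (fun y => ∑ j : Fin d, v y s j * u y s j) := by
    funext y
    exact Finset.sum_congr rfl fun j _ => mul_comm _ _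
  rw [hstep, hAid, hBid]
  have h := hequ x s i
  have hℏ' : ℏ ≠ 0 := ne_of_gt hℏ
  have hm' : m ≠ 0 := ne_of_gt hm
  -- from h : deriv u = -(P) - (ℏ/(2m)) Q, conclude Q + (2m/ℏ) P = -(2m/ℏ) deriv u
  field_simp at h ⊢
  linarith [h]

include hv in
theorem FTC_slice (x : Fin d → ℝ) (t : ℝ) (i : Fin d) :
    ∫ s in (0:ℝ)..t, deriv (fun τ => v x τ i) s = v x t i - v x 0 i := by
  have hD : ∀ s : ℝ, HasDerivAt (fun τ => v x τ i)
      (fderiv ℝ (fun p => uncurry v p i) (x, s) (0, 1)) s :=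
    fun s => sliceT (contDiff_eval hv i) x s
  have hcont : Continuous (fun s => fderiv ℝ (fun p => uncurry v p i) (x, s) (0, 1)) :=
    ((contDiff_fderiv_apply (contDiff_eval hv i) (0, 1)).continuous).comp (Continuous.prodMk_right x)
  have hcongr : ∫ s in (0:ℝ)..t, deriv (fun τ => v x τ i) s
      = ∫ s in (0:ℝ)..t, fderiv ℝ (fun p => uncurry v p i) (x, s) (0, 1) :=
    intervalIntegral.integral_congr (fun s _ => (hD s).deriv)
  rw [hcongr]
  exact intervalIntegral.integral_eq_sub_of_hasDerivAt (fun s _ => hD s)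
    (hcont.intervalIntegrable 0 t)

end PdxIdent

section Assemble

variable {d : ℕ} {ℏ m : ℝ} {V : (Fin d → ℝ) → ℝ → ℝ}
  {u v : (Fin d → ℝ) → ℝ → (Fin d → ℝ)} {S₀ ρ₀ : (Fin d → ℝ) → ℝ}
  (hℏ : 0 < ℏ) (hm : 0 < m)
  (hV : ContDiff ℝ (⊤ : ℕ∞) (Function.uncurry V))
  (hu : ContDiff ℝ (⊤ : ℕ∞) (Function.uncurry u))
  (hv : ContDiff ℝ (⊤ : ℕ∞) (Function.uncurry v))
  (hS₀ : ContDiff ℝ (⊤ : ℕ∞) S₀) (hρ₀ : ContDiff ℝ (⊤ : ℕ∞) ρ₀)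
  (hρ₀pos : ∀ x, 0 < ρ₀ x)

include hu in
theorem phase_eq (y : Fin d → ℝ) (t : ℝ) :
    phaseFromVel ℏ m V u v S₀ y t = S₀ y + ∫ s in (0:ℝ)..t, fI ℏ m V u v (y, s) := by
  unfold phaseFromVel
  congr 1
  exact intervalIntegral.integral_congr fun s _ => (fI_eq hu y s).symm

include hv hρ₀pos in
theorem log_density_eq (y : Fin d → ℝ) (t : ℝ) :
    Real.log (densityFromVel ℏ m u v ρ₀ y t)
      = Real.log (ρ₀ y) - ∫ s in (0:ℝ)..t, gI ℏ m u v (y, s) := by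
  unfold densityFromVel
  rw [Real.log_mul (ne_of_gt (hρ₀pos y)) (Real.exp_ne_zero _), Real.log_exp,
    sub_eq_add_neg]
  congr 2
  exact intervalIntegral.integral_congr fun s _ => (gI_eq hv y s).symm

include hρ₀pos in
theorem density_pos (y : Fin d → ℝ) (t : ℝ) : 0 < densityFromVel ℏ m u v ρ₀ y t :=
  mul_pos (hρ₀pos y) (Real.exp_pos _)

include hV hu hv hS₀ in
theorem phase_hasFDerivAt (x : Fin d → ℝ) (t : ℝ) :
    HasFDerivAt (fun y => phaseFromVel ℏ m V u v S₀ y t)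
      ((fderiv ℝ S₀ x) + ∫ s in (0:ℝ)..t,
        (fderiv ℝ (fI ℏ m V u v) (x, s)).comp (ContinuousLinearMap.inl ℝ (Fin d → ℝ) ℝ)) x := by
  rw [show (fun y => phaseFromVel ℏ m V u v S₀ y t)
      = fun y => S₀ y + ∫ s in (0:ℝ)..t, fI ℏ m V u v (y, s) from
    funext fun y => phase_eq hu y t]
  exact ((hS₀.differentiable (by simp) x).hasFDerivAt).add
    (key_param (fI_contDiff hV hu hv) x t)

include hV hu hv hρ₀ hρ₀pos in
theorem log_density_hasFDerivAt (x : Fin d → ℝ) (t : ℝ) :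
    HasFDerivAt (fun y => Real.log (densityFromVel ℏ m u v ρ₀ y t))
      (((ρ₀ x)⁻¹ • fderiv ℝ ρ₀ x) - ∫ s in (0:ℝ)..t,
        (fderiv ℝ (gI ℏ m u v) (x, s)).comp (ContinuousLinearMap.inl ℝ (Fin d → ℝ) ℝ)) x := by
  rw [show (fun y => Real.log (densityFromVel ℏ m u v ρ₀ y t))
      = fun y => Real.log (ρ₀ y) - ∫ s in (0:ℝ)..t, gI ℏ m u v (y, s) from
    funext fun y => log_density_eq hv hρ₀pos y t]
  exact (((hρ₀.differentiable (by simp) x).hasFDerivAt).log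
    (ne_of_gt (hρ₀pos x))).sub (key_param (gI_contDiff hu hv) x t)

include hℏ hm hV hu hv hS₀ in
theorem phase_pdx
    (heqv : ∀ (x : Fin d → ℝ) (t : ℝ) (i : Fin d),
      deriv (fun s => v x s i) t
        = -(1 / m) * pdx i (fun y => V y t) x
          + (1 / 2) * pdx i (fun y => ∑ j : Fin d, (u y t j) ^ 2) x
          - (1 / 2) * pdx i (fun y => ∑ j : Fin d, (v y t j) ^ 2) x
          + (ℏ / (2 * m)) * pdx i (fun y => ∑ j : Fin d, pdx j (fun z => u z t j) y) x)
    (hv0 : ∀ (x : Fin d → ℝ) (i : Fin d), v x 0 i = (ℏ / m) * pdx i S₀ x)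
    (x : Fin d → ℝ) (t : ℝ) (i : Fin d) :
    pdx i (fun y => phaseFromVel ℏ m V u v S₀ y t) x = (m / ℏ) * v x t i := by
  have hF := phase_hasFDerivAt (ℏ := ℏ) (m := m) hV hu hv hS₀ x t
  unfold pdx
  rw [hF.fderiv, ContinuousLinearMap.add_apply,
    key_param_apply (fI_contDiff hV hu hv) x t i]
  have h1 : ∀ s : ℝ, fderiv ℝ (fI ℏ m V u v) (x, s) (Pi.single i 1, 0)
      = (m / ℏ) * deriv (fun τ => v x τ i) s := fun s => by
    rw [← pdx_slice (fI_contDiff hV hu hv) x s i]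
    exact pdx_fI hℏ hm hV hu hv heqv x s i
  rw [intervalIntegral.integral_congr (fun s _ => h1 s),
    intervalIntegral.integral_const_mul, FTC_slice hv x t i]
  have h0 : fderiv ℝ S₀ x (Pi.single i 1) = (m / ℏ) * v x 0 i := by
    have h := hv0 x i
    unfold pdx at h
    rw [h]
    field_simp
  rw [h0]
  ring

include hℏ hm hV hu hv hρ₀ hρ₀pos in
theorem log_density_pdx
    (hequ : ∀ (x : Fin d → ℝ) (t : ℝ) (i : Fin d),
      deriv (fun s => u x s i) t
        = -(pdx i (fun y => ∑ j : Fin d, v y t j * u y t j) x)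
          - (ℏ / (2 * m)) * pdx i (fun y => ∑ j : Fin d, pdx j (fun z => v z t j) y) x)
    (hu0 : ∀ (x : Fin d → ℝ) (i : Fin d),
      u x 0 i = (ℏ / (2 * m)) * pdx i (fun y => Real.log (ρ₀ y)) x)
    (x : Fin d → ℝ) (t : ℝ) (i : Fin d) :
    pdx i (fun y => Real.log (densityFromVel ℏ m u v ρ₀ y t)) x
      = (2 * m / ℏ) * u x t i := by
  have hF := log_density_hasFDerivAt (ℏ := ℏ) (m := m) hV hu hv hρ₀ hρ₀pos x t
  unfold pdx
  rw [hF.fderiv, ContinuousLinearMap.sub_apply,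
    key_param_apply (gI_contDiff hu hv) x t i]
  have h1 : ∀ s : ℝ, fderiv ℝ (gI ℏ m u v) (x, s) (Pi.single i 1, 0)
      = -(2 * m / ℏ) * deriv (fun τ => u x τ i) s := fun s => by
    rw [← pdx_slice (gI_contDiff hu hv) x s i]
    exact pdx_gI hℏ hm hu hv hequ x s i
  rw [intervalIntegral.integral_congr (fun s _ => h1 s),
    intervalIntegral.integral_const_mul, FTC_slice hu x t i]
  have h0 : ((ρ₀ x)⁻¹ • fderiv ℝ ρ₀ x) (Pi.single i 1) = (2 * m / ℏ) * u x 0 i := by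
    have h := hu0 x i
    have hlog : HasFDerivAt (fun y => Real.log (ρ₀ y)) ((ρ₀ x)⁻¹ • fderiv ℝ ρ₀ x) x :=
      ((hρ₀.differentiable (by simp) x).hasFDerivAt).log (ne_of_gt (hρ₀pos x))
    unfold pdx at h
    rw [hlog.fderiv] at h
    have hℏ' : ℏ ≠ 0 := ne_of_gt hℏ
    have hm' : m ≠ 0 := ne_of_gt hm
    rw [h, ← mul_assoc, show (2 * m / ℏ) * (ℏ / (2 * m)) = 1 from by field_simp, one_mul]
  rw [h0]
  ring

include hu in
theorem phase_hasDerivAt (hV : ContDiff ℝ (⊤ : ℕ∞) (Function.uncurry V))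
    (hv : ContDiff ℝ (⊤ : ℕ∞) (Function.uncurry v))
    (x : Fin d → ℝ) (t : ℝ) :
    HasDerivAt (fun s => phaseFromVel ℏ m V u v S₀ x s) (fI ℏ m V u v (x, t)) t := by
  rw [show (fun s => phaseFromVel ℏ m V u v S₀ x s)
      = fun s => S₀ x + ∫ σ in (0:ℝ)..s, fI ℏ m V u v (x, σ) from
    funext fun s => phase_eq hu x s]
  have hc : Continuous (fun σ : ℝ => fI ℏ m V u v (x, σ)) :=
    ((fI_contDiff hV hu hv).continuous).comp (Continuous.prodMk_right x)
  simpa using ((hasDerivAt_const t (S₀ x)).fun_add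
    ((hc.integral_hasStrictDerivAt 0 t).hasDerivAt))

include hu hv hρ₀pos in
theorem log_density_hasDerivAt (x : Fin d → ℝ) (t : ℝ) :
    HasDerivAt (fun s => Real.log (densityFromVel ℏ m u v ρ₀ x s)) (-gI ℏ m u v (x, t)) t := by
  rw [show (fun s => Real.log (densityFromVel ℏ m u v ρ₀ x s))
      = fun s => Real.log (ρ₀ x) - ∫ σ in (0:ℝ)..s, gI ℏ m u v (x, σ) from
    funext fun s => log_density_eq hv hρ₀pos x s]
  have hc : Continuous (fun σ : ℝ => gI ℏ m u v (x, σ)) :=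
    ((gI_contDiff hu hv).continuous).comp (Continuous.prodMk_right x)
  simpa using ((hasDerivAt_const t (Real.log (ρ₀ x))).fun_sub
    ((hc.integral_hasStrictDerivAt 0 t).hasDerivAt))

end Assemble

section Schro

variable {d : ℕ} {ℏ m : ℝ} {V : (Fin d → ℝ) → ℝ → ℝ}
  {u v : (Fin d → ℝ) → ℝ → (Fin d → ℝ)} {S₀ ρ₀ : (Fin d → ℝ) → ℝ}
  (hℏ : 0 < ℏ) (hm : 0 < m)
  (hV : ContDiff ℝ (⊤ : ℕ∞) (Function.uncurry V))
  (hu : ContDiff ℝ (⊤ : ℕ∞) (Function.uncurry u))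
  (hv : ContDiff ℝ (⊤ : ℕ∞) (Function.uncurry v))
  (hS₀ : ContDiff ℝ (⊤ : ℕ∞) S₀) (hρ₀ : ContDiff ℝ (⊤ : ℕ∞) ρ₀)
  (hρ₀pos : ∀ x, 0 < ρ₀ x)

include hρ₀pos in
theorem psi_eq_exp (y : Fin d → ℝ) (t : ℝ) :
    psi (densityFromVel ℏ m u v ρ₀) (phaseFromVel ℏ m V u v S₀) y t
      = Complex.exp ((2⁻¹ : ℂ) * ((Real.log (densityFromVel ℏ m u v ρ₀ y t) : ℝ) : ℂ)
          + Complex.I * ((phaseFromVel ℏ m V u v S₀ y t : ℝ) : ℂ)) := by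
  have hpos := density_pos (ℏ := ℏ) (m := m) (u := u) (v := v) hρ₀pos y t
  unfold psi
  have h1 : Real.sqrt (densityFromVel ℏ m u v ρ₀ y t)
      = Real.exp (2⁻¹ * Real.log (densityFromVel ℏ m u v ρ₀ y t)) := by
    rw [Real.sqrt_eq_rpow, Real.rpow_def_of_pos hpos]
    congr 1
    ring
  rw [h1, Complex.ofReal_exp, ← Complex.exp_add]
  congr 1
  push_cast
  ring

include hℏ hm hV hu hv hS₀ hρ₀pos in
theorem psi_hasDerivAt (x : Fin d → ℝ) (t : ℝ) :
    HasDerivAt (fun s => psi (densityFromVel ℏ m u v ρ₀) (phaseFromVel ℏ m V u v S₀) x s)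
      (psi (densityFromVel ℏ m u v ρ₀) (phaseFromVel ℏ m V u v S₀) x t
        * ((2⁻¹ : ℂ) * ((-gI ℏ m u v (x, t) : ℝ) : ℂ)
            + Complex.I * ((fI ℏ m V u v (x, t) : ℝ) : ℂ))) t := by
  have h1 := (log_density_hasDerivAt (ℏ := ℏ) (m := m) hu hv hρ₀pos x t).ofReal_comp
  have h2 := (phase_hasDerivAt (ℏ := ℏ) (m := m) (S₀ := S₀) hu hV hv x t).ofReal_comp
  have hW : HasDerivAt
      (fun s => (2⁻¹ : ℂ) * ((Real.log (densityFromVel ℏ m u v ρ₀ x s) : ℝ) : ℂ)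
        + Complex.I * ((phaseFromVel ℏ m V u v S₀ x s : ℝ) : ℂ))
      ((2⁻¹ : ℂ) * ((-gI ℏ m u v (x, t) : ℝ) : ℂ)
        + Complex.I * ((fI ℏ m V u v (x, t) : ℝ) : ℂ)) t :=
    (h1.const_mul _).add (h2.const_mul Complex.I)
  have hE := hW.cexp
  rw [show (fun s => psi (densityFromVel ℏ m u v ρ₀) (phaseFromVel ℏ m V u v S₀) x s)
      = (fun s => Complex.exp ((2⁻¹ : ℂ) * ((Real.log (densityFromVel ℏ m u v ρ₀ x s) : ℝ) : ℂ)
          + Complex.I * ((phaseFromVel ℏ m V u v S₀ x s : ℝ) : ℂ))) from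
    funext fun s => psi_eq_exp hρ₀pos x s]
  rw [psi_eq_exp hρ₀pos x t]
  exact hE

include hℏ hm hV hu hv hS₀ hρ₀ hρ₀pos in
theorem psi_spatial
    (heqv : ∀ (x : Fin d → ℝ) (t : ℝ) (i : Fin d),
      deriv (fun s => v x s i) t
        = -(1 / m) * pdx i (fun y => V y t) x
          + (1 / 2) * pdx i (fun y => ∑ j : Fin d, (u y t j) ^ 2) x
          - (1 / 2) * pdx i (fun y => ∑ j : Fin d, (v y t j) ^ 2) x
          + (ℏ / (2 * m)) * pdx i (fun y => ∑ j : Fin d, pdx j (fun z => u z t j) y) x)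
    (hequ : ∀ (x : Fin d → ℝ) (t : ℝ) (i : Fin d),
      deriv (fun s => u x s i) t
        = -(pdx i (fun y => ∑ j : Fin d, v y t j * u y t j) x)
          - (ℏ / (2 * m)) * pdx i (fun y => ∑ j : Fin d, pdx j (fun z => v z t j) y) x)
    (hv0 : ∀ (x : Fin d → ℝ) (i : Fin d), v x 0 i = (ℏ / m) * pdx i S₀ x)
    (hu0 : ∀ (x : Fin d → ℝ) (i : Fin d),
      u x 0 i = (ℏ / (2 * m)) * pdx i (fun y => Real.log (ρ₀ y)) x)
    (x : Fin d → ℝ) (t : ℝ) :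
    ∃ L : (Fin d → ℝ) →L[ℝ] ℂ,
      HasFDerivAt (fun z => psi (densityFromVel ℏ m u v ρ₀) (phaseFromVel ℏ m V u v S₀) z t) L x ∧
      ∀ j : Fin d, L (Pi.single j 1)
        = psi (densityFromVel ℏ m u v ρ₀) (phaseFromVel ℏ m V u v S₀) x t
            * (((m / ℏ : ℝ) : ℂ) * (((u x t j : ℝ) : ℂ) + Complex.I * ((v x t j : ℝ) : ℂ))) := by
  have hlog := log_density_hasFDerivAt (ℏ := ℏ) (m := m) hV hu hv hρ₀ hρ₀pos x t
  have hS := phase_hasFDerivAt (ℏ := ℏ) (m := m) hV hu hv hS₀ x t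
  have h1 : HasFDerivAt (fun z => ((Real.log (densityFromVel ℏ m u v ρ₀ z t) : ℝ) : ℂ)) _ x :=
    Complex.ofRealCLM.hasFDerivAt.comp x hlog
  have h2 : HasFDerivAt (fun z => ((phaseFromVel ℏ m V u v S₀ z t : ℝ) : ℂ)) _ x :=
    Complex.ofRealCLM.hasFDerivAt.comp x hS
  have hW := (h1.const_mul (2⁻¹ : ℂ)).fun_add (h2.const_mul Complex.I)
  have hE := hW.cexp
  have hfun : (fun z => psi (densityFromVel ℏ m u v ρ₀) (phaseFromVel ℏ m V u v S₀) z t)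
      = (fun z => Complex.exp ((2⁻¹ : ℂ) * ((Real.log (densityFromVel ℏ m u v ρ₀ z t) : ℝ) : ℂ)
          + Complex.I * ((phaseFromVel ℏ m V u v S₀ z t : ℝ) : ℂ))) :=
    funext fun z => psi_eq_exp hρ₀pos z t
  rw [← hfun] at hE
  refine ⟨_, hE, ?_⟩
  intro j
  have hL1 : (((ρ₀ x)⁻¹ • fderiv ℝ ρ₀ x) - ∫ s in (0:ℝ)..t,
      (fderiv ℝ (gI ℏ m u v) (x, s)).comp (ContinuousLinearMap.inl ℝ (Fin d → ℝ) ℝ))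
      (Pi.single j 1) = (2 * m / ℏ) * u x t j := by
    have h := log_density_pdx hℏ hm hV hu hv hρ₀ hρ₀pos hequ hu0 x t j
    unfold pdx at h
    rw [hlog.fderiv] at h
    exact h
  have hL2 : ((fderiv ℝ S₀ x) + ∫ s in (0:ℝ)..t,
      (fderiv ℝ (fI ℏ m V u v) (x, s)).comp (ContinuousLinearMap.inl ℝ (Fin d → ℝ) ℝ))
      (Pi.single j 1) = (m / ℏ) * v x t j := by
    have h := phase_pdx hℏ hm hV hu hv hS₀ heqv hv0 x t j
    unfold pdx at h
    rw [hS.fderiv] at h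
    exact h
  rw [psi_eq_exp hρ₀pos x t]
  simp only [ContinuousLinearMap.smul_apply, ContinuousLinearMap.add_apply,
    ContinuousLinearMap.coe_comp', Function.comp_apply, Complex.ofRealCLM_apply, hL1, hL2,
    smul_eq_mul]
  have hℏ0 : (ℏ : ℂ) ≠ 0 := Complex.ofReal_ne_zero.mpr (ne_of_gt hℏ)
  push_cast
  field_simp

variable (heqv : ∀ (x : Fin d → ℝ) (t : ℝ) (i : Fin d),
      deriv (fun s => v x s i) t
        = -(1 / m) * pdx i (fun y => V y t) x
          + (1 / 2) * pdx i (fun y => ∑ j : Fin d, (u y t j) ^ 2) x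
          - (1 / 2) * pdx i (fun y => ∑ j : Fin d, (v y t j) ^ 2) x
          + (ℏ / (2 * m)) * pdx i (fun y => ∑ j : Fin d, pdx j (fun z => u z t j) y) x)
  (hequ : ∀ (x : Fin d → ℝ) (t : ℝ) (i : Fin d),
      deriv (fun s => u x s i) t
        = -(pdx i (fun y => ∑ j : Fin d, v y t j * u y t j) x)
          - (ℏ / (2 * m)) * pdx i (fun y => ∑ j : Fin d, pdx j (fun z => v z t j) y) x)
  (hv0 : ∀ (x : Fin d → ℝ) (i : Fin d), v x 0 i = (ℏ / m) * pdx i S₀ x)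
  (hu0 : ∀ (x : Fin d → ℝ) (i : Fin d),
      u x 0 i = (ℏ / (2 * m)) * pdx i (fun y => Real.log (ρ₀ y)) x)

include hℏ hm hV hu hv hS₀ hρ₀ hρ₀pos heqv hequ hv0 hu0 in
theorem psi_pdx2 (x : Fin d → ℝ) (t : ℝ) (j : Fin d) :
    pdx j (fun y => pdx j
        (fun z => psi (densityFromVel ℏ m u v ρ₀) (phaseFromVel ℏ m V u v S₀) z t) y) x
      = psi (densityFromVel ℏ m u v ρ₀) (phaseFromVel ℏ m V u v S₀) x t
          * ((((m / ℏ : ℝ) : ℂ) * (((u x t j : ℝ) : ℂ) + Complex.I * ((v x t j : ℝ) : ℂ))) ^ 2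
            + ((m / ℏ : ℝ) : ℂ) * (((pdx j (fun y => u y t j) x : ℝ) : ℂ)
                + Complex.I * ((pdx j (fun y => v y t j) x : ℝ) : ℂ))) := by
  have hrw : (fun y => pdx j
        (fun z => psi (densityFromVel ℏ m u v ρ₀) (phaseFromVel ℏ m V u v S₀) z t) y)
      = (fun y => psi (densityFromVel ℏ m u v ρ₀) (phaseFromVel ℏ m V u v S₀) y t
          * (((m / ℏ : ℝ) : ℂ) * (((u y t j : ℝ) : ℂ) + Complex.I * ((v y t j : ℝ) : ℂ)))) := by
    funext y
    obtain ⟨L, hL, hLv⟩ := psi_spatial hℏ hm hV hu hv hS₀ hρ₀ hρ₀pos heqv hequ hv0 hu0 y t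
    unfold pdx
    rw [hL.fderiv]
    exact hLv j
  rw [hrw]
  obtain ⟨L, hL, hLv⟩ := psi_spatial hℏ hm hV hu hv hS₀ hρ₀ hρ₀pos heqv hequ hv0 hu0 x t
  have hu_j : HasFDerivAt (fun y => u y t j) (fderiv ℝ (fun y => u y t j) x) x :=
    ((sliceF (contDiff_eval hu j) x t).differentiableAt).hasFDerivAt
  have hv_j : HasFDerivAt (fun y => v y t j) (fderiv ℝ (fun y => v y t j) x) x :=
    ((sliceF (contDiff_eval hv j) x t).differentiableAt).hasFDerivAt
  have hcu : HasFDerivAt (fun y => ((u y t j : ℝ) : ℂ))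
      (Complex.ofRealCLM.comp (fderiv ℝ (fun y => u y t j) x)) x :=
    Complex.ofRealCLM.hasFDerivAt.comp x hu_j
  have hcv : HasFDerivAt (fun y => Complex.I * ((v y t j : ℝ) : ℂ))
      (Complex.I • Complex.ofRealCLM.comp (fderiv ℝ (fun y => v y t j) x)) x :=
    (Complex.ofRealCLM.hasFDerivAt.comp x hv_j).const_mul Complex.I
  have hc : HasFDerivAt
      (fun y => ((m / ℏ : ℝ) : ℂ) * (((u y t j : ℝ) : ℂ) + Complex.I * ((v y t j : ℝ) : ℂ)))
      (((m / ℏ : ℝ) : ℂ) • (Complex.ofRealCLM.comp (fderiv ℝ (fun y => u y t j) x)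
        + Complex.I • Complex.ofRealCLM.comp (fderiv ℝ (fun y => v y t j) x))) x :=
    (hcu.add hcv).const_mul ((m / ℏ : ℝ) : ℂ)
  have hprod := hL.fun_mul hc
  unfold pdx
  rw [hprod.fderiv]
  simp only [ContinuousLinearMap.add_apply, ContinuousLinearMap.smul_apply,
    ContinuousLinearMap.coe_comp', Function.comp_apply, Complex.ofRealCLM_apply,
    smul_eq_mul, hLv j]
  ring

theorem scalar_key (hℏ : 0 < ℏ) (hm : 0 < m) (a b ab p q Vv : ℝ) :
    Complex.I * (ℏ : ℂ) * ((2⁻¹ : ℂ) * ((-(q + (2 * m / ℏ) * ab) : ℝ) : ℂ)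
        + Complex.I * (((1 / 2) * p + (m / (2 * ℏ)) * a - (m / (2 * ℏ)) * b - (1 / ℏ) * Vv : ℝ) : ℂ))
      = -((ℏ : ℂ) ^ 2 / (2 * (m : ℂ)))
          * ((((m / ℏ) ^ 2 : ℝ) : ℂ) * (a : ℂ) + 2 * Complex.I * (((m / ℏ) ^ 2 : ℝ) : ℂ) * (ab : ℂ)
            + Complex.I ^ 2 * (((m / ℏ) ^ 2 : ℝ) : ℂ) * (b : ℂ)
            + ((m / ℏ : ℝ) : ℂ) * (p : ℂ) + Complex.I * ((m / ℏ : ℝ) : ℂ) * (q : ℂ)) + (Vv : ℂ) := by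
  rw [show -((ℏ : ℂ) ^ 2 / (2 * (m : ℂ))) = ((-(ℏ ^ 2 / (2 * m)) : ℝ) : ℂ) from by
    push_cast; ring]
  rw [Complex.ext_iff]
  constructor <;>
    · simp only [Complex.add_re, Complex.add_im, Complex.mul_re, Complex.mul_im, Complex.sub_re,
        Complex.sub_im, Complex.neg_re, Complex.neg_im, Complex.I_re, Complex.I_im,
        Complex.ofReal_re, Complex.ofReal_im, Complex.re_ofNat, Complex.im_ofNat, pow_two,
        Complex.inv_re, Complex.inv_im, Complex.normSq_ofNat]
      field_simp
      ring

include hℏ hm hV hu hv hS₀ hρ₀ hρ₀pos heqv hequ hv0 hu0 in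
theorem schrodinger_main :
    SchrodingerEq ℏ m V (psi (densityFromVel ℏ m u v ρ₀) (phaseFromVel ℏ m V u v S₀)) := by
  intro x t
  rw [(psi_hasDerivAt hℏ hm hV hu hv hS₀ hρ₀pos x t).deriv]
  rw [Finset.sum_congr rfl fun j (_ : j ∈ Finset.univ) =>
    psi_pdx2 hℏ hm hV hu hv hS₀ hρ₀ hρ₀pos heqv hequ hv0 hu0 x t j]
  rw [← Finset.mul_sum]
  have hsum : (∑ j : Fin d,
      ((((m / ℏ : ℝ) : ℂ) * (((u x t j : ℝ) : ℂ) + Complex.I * ((v x t j : ℝ) : ℂ))) ^ 2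
        + ((m / ℏ : ℝ) : ℂ) * (((pdx j (fun y => u y t j) x : ℝ) : ℂ)
            + Complex.I * ((pdx j (fun y => v y t j) x : ℝ) : ℂ))))
      = (((m / ℏ) ^ 2 : ℝ) : ℂ) * ((∑ j : Fin d, (u x t j) ^ 2 : ℝ) : ℂ)
        + 2 * Complex.I * (((m / ℏ) ^ 2 : ℝ) : ℂ) * ((∑ j : Fin d, u x t j * v x t j : ℝ) : ℂ)
        + Complex.I ^ 2 * (((m / ℏ) ^ 2 : ℝ) : ℂ) * ((∑ j : Fin d, (v x t j) ^ 2 : ℝ) : ℂ)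
        + ((m / ℏ : ℝ) : ℂ) * ((∑ j : Fin d, pdx j (fun y => u y t j) x : ℝ) : ℂ)
        + Complex.I * ((m / ℏ : ℝ) : ℂ) * ((∑ j : Fin d, pdx j (fun y => v y t j) x : ℝ) : ℂ) := by
    push_cast
    rw [Finset.mul_sum, Finset.mul_sum, Finset.mul_sum, Finset.mul_sum, Finset.mul_sum,
      ← Finset.sum_add_distrib, ← Finset.sum_add_distrib, ← Finset.sum_add_distrib,
      ← Finset.sum_add_distrib]
    exact Finset.sum_congr rfl fun j _ => by ring
  rw [hsum]
  have hfg : fI ℏ m V u v (x, t)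
      = (1 / 2) * (∑ j : Fin d, pdx j (fun y => u y t j) x)
        + (m / (2 * ℏ)) * (∑ j : Fin d, (u x t j) ^ 2)
        - (m / (2 * ℏ)) * (∑ j : Fin d, (v x t j) ^ 2)
        - (1 / ℏ) * V x t := fI_eq hu x t
  have hgg : gI ℏ m u v (x, t)
      = (∑ j : Fin d, pdx j (fun y => v y t j) x)
        + (2 * m / ℏ) * (∑ j : Fin d, u x t j * v x t j) := gI_eq hv x t
  rw [hfg, hgg]
  have key := scalar_key (ℏ := ℏ) (m := m) hℏ hm
    (∑ j : Fin d, (u x t j) ^ 2) (∑ j : Fin d, (v x t j) ^ 2)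
    (∑ j : Fin d, u x t j * v x t j) (∑ j : Fin d, pdx j (fun y => u y t j) x)
    (∑ j : Fin d, pdx j (fun y => v y t j) x) (V x t)
  set Ψ := psi (densityFromVel ℏ m u v ρ₀) (phaseFromVel ℏ m V u v S₀) x t with hΨ
  calc Complex.I * (ℏ : ℂ) * (Ψ * ((2⁻¹ : ℂ) * ((-(∑ j : Fin d, pdx j (fun y => v y t j) x
            + (2 * m / ℏ) * ∑ j : Fin d, u x t j * v x t j) : ℝ) : ℂ)
          + Complex.I * (((1 / 2) * (∑ j : Fin d, pdx j (fun y => u y t j) x)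
              + (m / (2 * ℏ)) * (∑ j : Fin d, (u x t j) ^ 2)
              - (m / (2 * ℏ)) * (∑ j : Fin d, (v x t j) ^ 2) - (1 / ℏ) * V x t : ℝ) : ℂ)))
      = Ψ * (Complex.I * (ℏ : ℂ) * ((2⁻¹ : ℂ) * ((-(∑ j : Fin d, pdx j (fun y => v y t j) x
            + (2 * m / ℏ) * ∑ j : Fin d, u x t j * v x t j) : ℝ) : ℂ)
          + Complex.I * (((1 / 2) * (∑ j : Fin d, pdx j (fun y => u y t j) x)
              + (m / (2 * ℏ)) * (∑ j : Fin d, (u x t j) ^ 2)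
              - (m / (2 * ℏ)) * (∑ j : Fin d, (v x t j) ^ 2) - (1 / ℏ) * V x t : ℝ) : ℂ))) := by
        ring
    _ = Ψ * (-((ℏ : ℂ) ^ 2 / (2 * (m : ℂ)))
          * ((((m / ℏ) ^ 2 : ℝ) : ℂ) * ((∑ j : Fin d, (u x t j) ^ 2 : ℝ) : ℂ)
            + 2 * Complex.I * (((m / ℏ) ^ 2 : ℝ) : ℂ) * ((∑ j : Fin d, u x t j * v x t j : ℝ) : ℂ)
            + Complex.I ^ 2 * (((m / ℏ) ^ 2 : ℝ) : ℂ) * ((∑ j : Fin d, (v x t j) ^ 2 : ℝ) : ℂ)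
            + ((m / ℏ : ℝ) : ℂ) * ((∑ j : Fin d, pdx j (fun y => u y t j) x : ℝ) : ℂ)
            + Complex.I * ((m / ℏ : ℝ) : ℂ) * ((∑ j : Fin d, pdx j (fun y => v y t j) x : ℝ) : ℂ))
          + ((V x t : ℝ) : ℂ)) := by rw [key]
    _ = -((ℏ : ℂ) ^ 2 / (2 * (m : ℂ)))
          * (Ψ * ((((m / ℏ) ^ 2 : ℝ) : ℂ) * ((∑ j : Fin d, (u x t j) ^ 2 : ℝ) : ℂ)
            + 2 * Complex.I * (((m / ℏ) ^ 2 : ℝ) : ℂ) * ((∑ j : Fin d, u x t j * v x t j : ℝ) : ℂ)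
            + Complex.I ^ 2 * (((m / ℏ) ^ 2 : ℝ) : ℂ) * ((∑ j : Fin d, (v x t j) ^ 2 : ℝ) : ℂ)
            + ((m / ℏ : ℝ) : ℂ) * ((∑ j : Fin d, pdx j (fun y => u y t j) x : ℝ) : ℂ)
            + Complex.I * ((m / ℏ : ℝ) : ℂ) * ((∑ j : Fin d, pdx j (fun y => v y t j) x : ℝ) : ℂ)))
          + ((V x t : ℝ) : ℂ) * Ψ := by ring

end Schro

end WFR

/-- Smooth velocities `u, v` satisfying the gradient-form
stochastic-mechanics equations, with initial data `v(·,0) = (ℏ/m)∇S₀` and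
`u(·,0) = (ℏ/(2m))∇ log ρ₀`, determine, by time integration of the phase and
log-density, a positive density `ρ` and a phase `S` with `v = (ℏ/m)∇S` and
`u = (ℏ/(2m))∇ log ρ`, such that `ψ = √ρ e^{iS}` satisfies the Schrödinger equation
with initial value `ψ(x,0) = √(ρ₀(x)) e^{i S₀(x)}`. -/
theorem wave_function_recovery_from_velocities
    (d : ℕ) (hd : 1 ≤ d) (ℏ m : ℝ) (hℏ : 0 < ℏ) (hm : 0 < m)
    (V : (Fin d → ℝ) → ℝ → ℝ) (hV : ContDiff ℝ (⊤ : ℕ∞) (Function.uncurry V))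
    (u v : (Fin d → ℝ) → ℝ → (Fin d → ℝ))
    (hu : ContDiff ℝ (⊤ : ℕ∞) (Function.uncurry u))
    (hv : ContDiff ℝ (⊤ : ℕ∞) (Function.uncurry v))
    (heqv : ∀ (x : Fin d → ℝ) (t : ℝ) (i : Fin d),
      deriv (fun s => v x s i) t
        = -(1 / m) * pdx i (fun y => V y t) x
          + (1 / 2) * pdx i (fun y => ∑ j : Fin d, (u y t j) ^ 2) x
          - (1 / 2) * pdx i (fun y => ∑ j : Fin d, (v y t j) ^ 2) x
          + (ℏ / (2 * m)) * pdx i (fun y => ∑ j : Fin d, pdx j (fun z => u z t j) y) x)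
    (hequ : ∀ (x : Fin d → ℝ) (t : ℝ) (i : Fin d),
      deriv (fun s => u x s i) t
        = -(pdx i (fun y => ∑ j : Fin d, v y t j * u y t j) x)
          - (ℏ / (2 * m)) * pdx i (fun y => ∑ j : Fin d, pdx j (fun z => v z t j) y) x)
    (S₀ ρ₀ : (Fin d → ℝ) → ℝ)
    (hS₀ : ContDiff ℝ (⊤ : ℕ∞) S₀) (hρ₀ : ContDiff ℝ (⊤ : ℕ∞) ρ₀)
    (hρ₀pos : ∀ x, 0 < ρ₀ x)
    (hv0 : ∀ (x : Fin d → ℝ) (i : Fin d), v x 0 i = (ℏ / m) * pdx i S₀ x)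
    (hu0 : ∀ (x : Fin d → ℝ) (i : Fin d),
      u x 0 i = (ℏ / (2 * m)) * pdx i (fun y => Real.log (ρ₀ y)) x) :
    (∀ (x : Fin d → ℝ) (t : ℝ), 0 < densityFromVel ℏ m u v ρ₀ x t)
    ∧ (∀ (x : Fin d → ℝ) (t : ℝ) (i : Fin d),
        v x t i = (ℏ / m) * pdx i (fun y => phaseFromVel ℏ m V u v S₀ y t) x)
    ∧ (∀ (x : Fin d → ℝ) (t : ℝ) (i : Fin d),
        u x t i
          = (ℏ / (2 * m))
              * pdx i (fun y => Real.log (densityFromVel ℏ m u v ρ₀ y t)) x)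
    ∧ SchrodingerEq ℏ m V (psi (densityFromVel ℏ m u v ρ₀) (phaseFromVel ℏ m V u v S₀))
    ∧ (∀ x : Fin d → ℝ,
        psi (densityFromVel ℏ m u v ρ₀) (phaseFromVel ℏ m V u v S₀) x 0
          = (Real.sqrt (ρ₀ x) : ℂ) * Complex.exp (Complex.I * (S₀ x : ℂ))) := by
  refine ⟨fun x t => WFR.density_pos hρ₀pos x t, fun x t i => ?_, fun x t i => ?_,
    WFR.schrodinger_main hℏ hm hV hu hv hS₀ hρ₀ hρ₀pos heqv hequ hv0 hu0, fun x => ?_⟩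
  · rw [WFR.phase_pdx hℏ hm hV hu hv hS₀ heqv hv0 x t i]
    field_simp
  · rw [WFR.log_density_pdx hℏ hm hV hu hv hρ₀ hρ₀pos hequ hu0 x t i]
    field_simp
  · simp [psi, phaseFromVel, densityFromVel, intervalIntegral.integral_same]
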